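/- Let T be a join tree of a hypergraph, T+ a subtree of T, and V a node not in T+ but adjacent to T+. Suppose vertex p belongs to V but to no node of T+. Then every vertex u that appears both in V's hyperedge together with p in some node outside T+ and in some node of T+ must belong to V. Formally: if u appears in a node of T+ and u,p appear together in a node of T outside T+, then u ∈ V. -/

import Mathlib

private lemma walk_of_induce {ι : Type*} (G : SimpleGraph ι) (s : Set ι) {a b : s}
    (w : (G.induce s).Walk a b) :
    ∃ w' : G.Walk (a : ι) (b : ι), ∀ x ∈ w'.support, x ∈ s := by
  induction w with
  | nil => exact ⟨SimpleGraph.Walk.nil, by rintro x hx; simp at hx; subst hx; exact Subtype.coe_prop _⟩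
  | cons h w ih =>
    obtain ⟨w', hw'⟩ := ih
    refine ⟨SimpleGraph.Walk.cons h w', ?_⟩
    intro x hx
    rcases List.mem_cons.mp (show x ∈ _ :: w'.support from hx) with rfl | hx
    · exact Subtype.coe_prop _
    · exact hw' x hx

/-- Let `G` (with node labels `lab`) be a join tree of a
hypergraph: a tree satisfying the running intersection property.  Let `S` be a
connected subtree, and `v₀ ∉ S` a node adjacent to `S`.  Suppose the vertex `p`
belongs to the label of `v₀` but to no label of a node of `S`.  Then every
vertex `u` that appears in some node of `S` and appears together with `p` in
some node outside `S` must belong to the label of `v₀`. -/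
theorem handled_node_contains_prior_neighbors {V ι : Type*}
    (G : SimpleGraph ι) (hG : G.IsTree) (lab : ι → Finset V)
    (hrip : ∀ v : V, (G.induce {i | v ∈ lab i}).Preconnected)
    (S : Set ι) (hconn : (G.induce S).Preconnected)
    (v₀ : ι) (hv₀ : v₀ ∉ S) (hadj : ∃ i ∈ S, G.Adj v₀ i)
    (p : V) (hp : p ∈ lab v₀) (hpS : ∀ i ∈ S, p ∉ lab i)
    (u : V) (huS : ∃ i ∈ S, u ∈ lab i)
    (hup : ∃ j : ι, j ∉ S ∧ u ∈ lab j ∧ p ∈ lab j) :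
    u ∈ lab v₀ := by
  by_contra hu
  obtain ⟨i₀, hi₀S, h₀⟩ := hadj
  obtain ⟨i, hiS, hui⟩ := huS
  obtain ⟨j, hjS, huj, hpj⟩ := hup
  -- walk from i to j through nodes containing u
  obtain ⟨Wu, hWu⟩ := (hrip u ⟨i, hui⟩ ⟨j, huj⟩).elim
    (fun w => walk_of_induce G {i | u ∈ lab i} w)
  -- walk from v₀ to j through nodes containing p
  obtain ⟨Wp, hWp⟩ := (hrip p ⟨v₀, hp⟩ ⟨j, hpj⟩).elim
    (fun w => walk_of_induce G {i | p ∈ lab i} w)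
  -- walk from i to i₀ inside S
  obtain ⟨Ws, hWs⟩ := (hconn ⟨i, hiS⟩ ⟨i₀, hi₀S⟩).elim
    (fun w => walk_of_induce G S w)
  -- the edge (v₀, i₀) is a bridge
  have hb : G.IsBridge s(v₀, i₀) :=
    (SimpleGraph.isAcyclic_iff_forall_edge_isBridge.mp hG.IsAcyclic) h₀
  have hnreach : ¬ (G.deleteEdges {s(v₀, i₀)}).Reachable v₀ i₀ :=
    (SimpleGraph.isBridge_iff).mp hb
  -- transfer the walks to the graph with this edge deleted
  have hWu' : ∀ e ∈ Wu.edges, e ∉ ({s(v₀, i₀)} : Set (Sym2 ι)) := by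
    intro e he hmem
    rw [Set.mem_singleton_iff] at hmem
    subst hmem
    exact hu (hWu v₀ (SimpleGraph.Walk.fst_mem_support_of_mem_edges Wu he))
  have hWp' : ∀ e ∈ Wp.edges, e ∉ ({s(v₀, i₀)} : Set (Sym2 ι)) := by
    intro e he hmem
    rw [Set.mem_singleton_iff] at hmem
    subst hmem
    exact hpS i₀ hi₀S (hWp i₀ (SimpleGraph.Walk.snd_mem_support_of_mem_edges Wp he))
  have hWs' : ∀ e ∈ Ws.edges, e ∉ ({s(v₀, i₀)} : Set (Sym2 ι)) := by
    intro e he hmem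
    rw [Set.mem_singleton_iff] at hmem
    subst hmem
    exact hv₀ (hWs v₀ (SimpleGraph.Walk.fst_mem_support_of_mem_edges Ws he))
  exact hnreach
    ((Wp.toDeleteEdges _ hWp').reachable.trans
      (((Wu.toDeleteEdges _ hWu').reachable.symm).trans
        (Ws.toDeleteEdges _ hWs').reachable))
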